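/- Let 0 < α < 1/M, β > 0 and d ∈ ℝ^N with d_m > 0 for all m, and let x̂^∞ be the fixed point of the map x ↦ F(x) − β d. Set d̲ = min_{m=1,…,N} d_m, U = max{ 1, exp(x̂_{1,0}), …, exp(x̂_{N,0}) }, and γ = ( (1 − αM)·(1 + 2αU(M−1)) / (1 − αM + α)² )·exp(−β d̲). Then the reference dynamical system satisfies ‖exp(x̂_i) − exp(x̂^∞)‖₁ ≤ γ · ‖exp(x̂_{i−1}) − exp(x̂^∞)‖₁ for every i ≥ 1, where exp is applied componentwise. -/

import Mathlib

/-- The αβ-HMM log-belief-ratio mapping `F`, defined componentwise for `m = 1, …, M-1` by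
`F_m(x) = log(((1 - αM)·exp(x_m) + α + α·Σ_n exp(x_n)) / (1 - αM + α + α·Σ_n exp(x_n)))`. -/
noncomputable def abHMM.F (α : ℝ) (M : ℕ) (x : Fin (M - 1) → ℝ) : Fin (M - 1) → ℝ :=
  fun m => Real.log (((1 - α * M) * Real.exp (x m) + α + α * ∑ n, Real.exp (x n)) /
    (1 - α * M + α + α * ∑ n, Real.exp (x n)))

lemma abHMM.aux_diff (a α u v S T : ℝ) (h1 : (a + α) + α*S ≠ 0) (h2 : (a + α) + α*T ≠ 0) :
    (a*u + α + α*S)/((a+α)+α*S) - (a*v + α + α*T)/((a+α)+α*T)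
      = a*(u-v)/((a+α)+α*S) + a*α*(v-1)*(T-S)/(((a+α)+α*S)*((a+α)+α*T)) := by
  field_simp
  ring

lemma abHMM.aux_bound (a α u v S T : ℝ) (ha : 0 < a) (hα : 0 < α)
    (hc1 : a + α ≤ 1) (hS : 0 ≤ S) (hT : 0 ≤ T) :
    |(a*u + α + α*S)/((a+α)+α*S) - (a*v + α + α*T)/((a+α)+α*T)|
      ≤ a/(a+α)^2 * |u-v| + a*α*|v-1|/(a+α)^2 * |S-T| := by
  have hc : 0 < a + α := by linarith
  have h1 : 0 < (a+α) + α*S := by nlinarith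
  have h2 : 0 < (a+α) + α*T := by nlinarith
  have hc2 : (0:ℝ) < (a+α)^2 := by positivity
  rw [abHMM.aux_diff a α u v S T h1.ne' h2.ne']
  refine (abs_add_le _ _).trans ?_
  have e1 : |a*(u-v)/((a+α)+α*S)| ≤ a/(a+α)^2 * |u-v| := by
    rw [abs_div, abs_mul, abs_of_pos h1, abs_of_pos ha, div_mul_eq_mul_div]
    have hle : (a+α)^2 ≤ (a+α) + α*S := by nlinarith
    gcongr
  have e2 : |a*α*(v-1)*(T-S)/(((a+α)+α*S)*((a+α)+α*T))|
      ≤ a*α*|v-1|/(a+α)^2 * |S-T| := by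
    rw [abs_div, abs_mul, abs_mul, abs_mul, abs_of_pos ha, abs_of_pos hα,
      abs_of_pos (mul_pos h1 h2), abs_sub_comm T S, div_mul_eq_mul_div]
    have hle : (a+α)^2 ≤ ((a+α)+α*S) * ((a+α)+α*T) := by
      nlinarith [mul_nonneg (mul_nonneg hα.le hS) hc.le,
        mul_nonneg (mul_nonneg hα.le hT) hc.le,
        mul_nonneg (mul_nonneg hα.le hS) (mul_nonneg hα.le hT)]
    gcongr
  linarith

set_option maxHeartbeats 1000000 in
/-- Corollary 1, first part: with `d̲ = min_m d_m`,
`U = max{1, exp(x̂_{1,0}), …, exp(x̂_{N,0})}` and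
`γ = ((1-αM)(1 + 2αU(M-1))/(1-αM+α)²)·exp(-β d̲)`, the reference dynamical system
satisfies `‖exp(x̂_i) - exp(x̂^∞)‖₁ ≤ γ ‖exp(x̂_{i-1}) - exp(x̂^∞)‖₁` for every `i ≥ 1`,
where `exp` acts componentwise and `‖v‖₁ = Σ_m |v_m|`. -/
theorem abHMM_reference_system_L1_contraction (M : ℕ) (hM : 2 ≤ M) (α β : ℝ)
    (hα : 0 < α) (hα' : α < 1 / M) (hβ : 0 < β)
    (d : Fin (M - 1) → ℝ) (hd : ∀ m, 0 < d m)
    (xinf : Fin (M - 1) → ℝ) (hfix : xinf = fun m => abHMM.F α M xinf m - β * d m)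
    (xh : ℕ → Fin (M - 1) → ℝ)
    (hrec : ∀ i : ℕ, xh (i + 1) = fun m => abHMM.F α M (xh i) m - β * d m)
    (dlow : ℝ) (hdlow : dlow = sInf (Set.range d))
    (U : ℝ) (hU : U = max 1 (sSup (Set.range fun m => Real.exp (xh 0 m))))
    (γ : ℝ)
    (hγ : γ = (1 - α * M) * (1 + 2 * α * U * ((M : ℝ) - 1)) / (1 - α * M + α) ^ 2 *
      Real.exp (-(β * dlow))) :
    ∀ i : ℕ, ∑ m, |Real.exp (xh (i + 1) m) - Real.exp (xinf m)| ≤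
      γ * ∑ m, |Real.exp (xh i m) - Real.exp (xinf m)| := by
  have hMpos : (0:ℝ) < (M:ℝ) := by
    have : 0 < M := by omega
    exact_mod_cast this
  have hM1 : (1:ℝ) ≤ (M:ℝ) := by
    have : 1 ≤ M := by omega
    exact_mod_cast this
  have haM : α * M < 1 := (lt_div_iff₀ hMpos).mp hα'
  set a : ℝ := 1 - α * M with ha_def
  have ha : 0 < a := by rw [ha_def]; linarith
  have hc1 : a + α ≤ 1 := by
    have h1 : α * 1 ≤ α * M := by
      apply mul_le_mul_of_nonneg_left hM1 hα.le
    rw [ha_def]; linarith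
  have hc : 0 < a + α := by linarith
  have hSnn : ∀ (x : Fin (M-1) → ℝ), 0 ≤ ∑ n, Real.exp (x n) :=
    fun x => Finset.sum_nonneg fun n _ => (Real.exp_pos _).le
  have hexpF : ∀ (x : Fin (M-1) → ℝ) (m : Fin (M-1)),
      Real.exp (abHMM.F α M x m)
        = (a * Real.exp (x m) + α + α * ∑ n, Real.exp (x n))
          / ((a + α) + α * ∑ n, Real.exp (x n)) := by
    intro x m
    have hnum : 0 < a * Real.exp (x m) + α + α * ∑ n, Real.exp (x n) := by
      have h := hSnn x
      nlinarith [Real.exp_pos (x m)]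
    have hden : 0 < (a + α) + α * ∑ n, Real.exp (x n) := by
      have h := hSnn x; nlinarith
    have harg : ((1 - α * (M:ℝ)) * Real.exp (x m) + α + α * ∑ n, Real.exp (x n)) /
        (1 - α * (M:ℝ) + α + α * ∑ n, Real.exp (x n))
        = (a * Real.exp (x m) + α + α * ∑ n, Real.exp (x n))
          / ((a + α) + α * ∑ n, Real.exp (x n)) := by
      rw [ha_def]
    simp only [abHMM.F]
    rw [harg, Real.exp_log (div_pos hnum hden)]
  have hstep : ∀ (j : ℕ) (m : Fin (M-1)),
      Real.exp (xh (j+1) m) = Real.exp (-(β * d m)) *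
        ((a * Real.exp (xh j m) + α + α * ∑ n, Real.exp (xh j n))
          / ((a + α) + α * ∑ n, Real.exp (xh j n))) := by
    intro j m
    rw [hrec j]
    show Real.exp (abHMM.F α M (xh j) m - β * d m) = _
    rw [sub_eq_add_neg, Real.exp_add, hexpF, mul_comm]
  have hfixstep : ∀ m, Real.exp (xinf m) = Real.exp (-(β * d m)) *
        ((a * Real.exp (xinf m) + α + α * ∑ n, Real.exp (xinf n))
          / ((a + α) + α * ∑ n, Real.exp (xinf n))) := by
    intro m
    conv_lhs => rw [hfix]
    show Real.exp (abHMM.F α M xinf m - β * d m) = _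
    rw [sub_eq_add_neg, Real.exp_add, hexpF, mul_comm]
  have hUge1 : (1:ℝ) ≤ U := by rw [hU]; exact le_max_left _ _
  have hU0 : ∀ m, Real.exp (xh 0 m) ≤ U := by
    intro m
    have h1 : Real.exp (xh 0 m) ≤ sSup (Set.range fun k => Real.exp (xh 0 k)) :=
      le_csSup ((Set.finite_range _).bddAbove) (Set.mem_range_self m)
    refine h1.trans ?_
    rw [hU]; exact le_max_right _ _
  have hinv : ∀ j m, Real.exp (xh j m) ≤ U := by
    intro j
    induction j with
    | zero => exact hU0
    | succ j ih =>
      intro m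
      rw [hstep j m]
      have hSj := hSnn (xh j)
      have hden : 0 < (a + α) + α * ∑ n, Real.exp (xh j n) := by nlinarith
      have hnum : 0 ≤ a * Real.exp (xh j m) + α + α * ∑ n, Real.exp (xh j n) := by
        nlinarith [Real.exp_pos (xh j m)]
      have hQ : (a * Real.exp (xh j m) + α + α * ∑ n, Real.exp (xh j n))
          / ((a + α) + α * ∑ n, Real.exp (xh j n)) ≤ U := by
        rw [div_le_iff₀ hden]
        nlinarith [mul_le_mul_of_nonneg_left (ih m) ha.le,
          mul_nonneg (sub_nonneg.mpr hUge1) (mul_nonneg hα.le hSj),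
          mul_nonneg hα.le hSj]
      have hE : Real.exp (-(β * d m)) ≤ 1 := by
        rw [show (1:ℝ) = Real.exp 0 by simp]
        apply Real.exp_le_exp.mpr
        nlinarith [hd m]
      calc Real.exp (-(β * d m)) * _ ≤ 1 * ((a * Real.exp (xh j m) + α + α * ∑ n, Real.exp (xh j n))
          / ((a + α) + α * ∑ n, Real.exp (xh j n))) :=
            mul_le_mul_of_nonneg_right hE (div_nonneg hnum hden.le)
        _ = _ := one_mul _
        _ ≤ U := hQ
  have hdl : ∀ m, dlow ≤ d m := by
    intro m
    rw [hdlow]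
    exact csInf_le ((Set.finite_range d).bddBelow) ⟨m, rfl⟩
  intro i
  set E : ℝ := Real.exp (-(β * dlow)) with hE_def
  set K : ℝ := ∑ m, |Real.exp (xh i m) - Real.exp (xinf m)| with hK
  have hKnn : 0 ≤ K := Finset.sum_nonneg fun m _ => abs_nonneg _
  have habsS : |(∑ n, Real.exp (xh i n)) - ∑ n, Real.exp (xinf n)| ≤ K := by
    rw [hK, ← Finset.sum_sub_distrib]
    exact Finset.abs_sum_le_sum_abs _ _
  have habs1 : ∀ m, |Real.exp (xh i m) - 1| ≤ U := by
    intro m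
    rw [abs_le]
    constructor
    · nlinarith [Real.exp_pos (xh i m)]
    · nlinarith [hinv i m]
  have hm : ∀ m, |Real.exp (xh (i+1) m) - Real.exp (xinf m)| ≤
      E * (a/(a+α)^2 * |Real.exp (xh i m) - Real.exp (xinf m)|
        + a*α*|Real.exp (xh i m) - 1|/(a+α)^2
          * |(∑ n, Real.exp (xh i n)) - ∑ n, Real.exp (xinf n)|) := by
    intro m
    conv_lhs => rw [hstep i m, hfixstep m]
    rw [← mul_sub, abs_mul, Real.abs_exp]
    apply mul_le_mul
    · rw [hE_def]
      apply Real.exp_le_exp.mpr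
      nlinarith [hdl m]
    · have hb := abHMM.aux_bound a α (Real.exp (xinf m)) (Real.exp (xh i m))
        (∑ n, Real.exp (xinf n)) (∑ n, Real.exp (xh i n)) ha hα hc1 (hSnn xinf) (hSnn (xh i))
      rw [abs_sub_comm]
      refine hb.trans (le_of_eq ?_)
      rw [abs_sub_comm (Real.exp (xinf m)) (Real.exp (xh i m)),
        abs_sub_comm (∑ n, Real.exp (xinf n)) (∑ n, Real.exp (xh i n))]
    · exact abs_nonneg _
    · exact (Real.exp_pos _).le
  have hm' : ∀ m, |Real.exp (xh (i+1) m) - Real.exp (xinf m)| ≤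
      (E * (a/(a+α)^2)) * |Real.exp (xh i m) - Real.exp (xinf m)|
        + E * (a*α*U/(a+α)^2 * K) := by
    intro m
    refine (hm m).trans ?_
    have hEpos : (0:ℝ) < E := Real.exp_pos _
    have t1 : a*α*|Real.exp (xh i m) - 1|/(a+α)^2
        * |(∑ n, Real.exp (xh i n)) - ∑ n, Real.exp (xinf n)|
        ≤ a*α*U/(a+α)^2 * K := by
      gcongr
      all_goals first | exact habs1 m | exact habsS | positivity
    calc E * (a/(a+α)^2 * |Real.exp (xh i m) - Real.exp (xinf m)|
        + a*α*|Real.exp (xh i m) - 1|/(a+α)^2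
          * |(∑ n, Real.exp (xh i n)) - ∑ n, Real.exp (xinf n)|)
        = (E * (a/(a+α)^2)) * |Real.exp (xh i m) - Real.exp (xinf m)|
          + E * (a*α*|Real.exp (xh i m) - 1|/(a+α)^2
            * |(∑ n, Real.exp (xh i n)) - ∑ n, Real.exp (xinf n)|) := by ring
      _ ≤ _ := add_le_add_right (mul_le_mul_of_nonneg_left t1 hEpos.le) _
  have hcard : ((Finset.univ : Finset (Fin (M-1))).card : ℝ) = (M:ℝ) - 1 := by
    rw [Finset.card_univ, Fintype.card_fin]
    rw [Nat.cast_sub (by omega)]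
    simp
  calc ∑ m, |Real.exp (xh (i+1) m) - Real.exp (xinf m)|
      ≤ ∑ m : Fin (M-1), ((E * (a/(a+α)^2)) * |Real.exp (xh i m) - Real.exp (xinf m)|
        + E * (a*α*U/(a+α)^2 * K)) := Finset.sum_le_sum fun m _ => hm' m
    _ = (E * (a/(a+α)^2)) * K + ((M:ℝ) - 1) * (E * (a*α*U/(a+α)^2 * K)) := by
        rw [Finset.sum_add_distrib, ← Finset.mul_sum, ← hK, Finset.sum_const, nsmul_eq_mul, hcard]
    _ ≤ γ * K := by
        have hMm1 : (0:ℝ) ≤ (M:ℝ) - 1 := by linarith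
        have hUnn : (0:ℝ) ≤ U := by linarith
        have key : 0 ≤ E * a * ((a+α)^2)⁻¹ * K * (α * U * ((M:ℝ) - 1)) := by
          apply mul_nonneg
          apply mul_nonneg
          apply mul_nonneg
          · apply mul_nonneg (Real.exp_pos _).le ha.le
          · positivity
          · exact hKnn
          · exact mul_nonneg (mul_nonneg hα.le hUnn) hMm1
        have hid : γ * K - ((E * (a/(a+α)^2)) * K + ((M:ℝ) - 1) * (E * (a*α*U/(a+α)^2 * K)))
            = E * a * ((a+α)^2)⁻¹ * K * (α * U * ((M:ℝ) - 1)) := by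
          rw [hγ]
          field_simp
          ring
        linarith
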